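/- Let j ≥ 2 be an integer and let s ∈ ℝ satisfy −j + 1/2 ≤ s ≤ −j/2. There exists a constant C > 0 depending only on j and s such that for every λ ≥ 1 and every nonnegative measurable f : Ż_λ × ℝ → [0,∞], the X^{s,1/(2j)} norm of f is at most C times the Z^s norm of f. -/

import Mathlib

open MeasureTheory
open scoped ENNReal

noncomputable section

/-- Japanese bracket `⟨x⟩ = (1+x²)^{1/2}`. -/
def jap (x : ℝ) : ℝ := Real.sqrt (1 + x ^ 2)

/-- Modulation `σ = τ − k^{2j+1}` at the frequency `k = m/λ ∈ Ż_λ`. -/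
def sigL (j : ℕ) (lam : ℝ) (m : ℤ) (τ : ℝ) : ℝ := τ - ((m : ℝ) / lam) ^ (2 * j + 1)

/-- Convolution on `Ż_λ × ℝ` (frequencies indexed by `m ∈ ℤ∖{0}`, `k = m/λ`):
`(f∗g)(k,τ) = (1/λ)Σ_{k₁≠0, k−k₁≠0} ∫ f(k₁,τ₁) g(k−k₁,τ−τ₁) dτ₁`. -/
def convL (lam : ℝ) (f g : ℤ → ℝ → ℝ≥0∞) (m : ℤ) (τ : ℝ) : ℝ≥0∞ :=
  ENNReal.ofReal (1 / lam) *
    ∑' m₁ : ℤ, if m₁ ≠ 0 ∧ m - m₁ ≠ 0 then ∫⁻ τ₁, f m₁ τ₁ * g (m - m₁) (τ - τ₁) else 0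

/-- `L²_λ` norm: `((1/λ) Σ_k ∫ f(k,τ)² dτ)^{1/2}`. -/
def L2L (lam : ℝ) (f : ℤ → ℝ → ℝ≥0∞) : ℝ≥0∞ :=
  (ENNReal.ofReal (1 / lam) * ∑' m : ℤ, ∫⁻ τ, (f m τ) ^ 2) ^ (1 / 2 : ℝ)

/-- `X^{s,b}` norm: the `L²_λ` norm of `⟨k⟩^s ⟨σ⟩^b f(k,τ)`. -/
def Xn (j : ℕ) (lam s b : ℝ) (f : ℤ → ℝ → ℝ≥0∞) : ℝ≥0∞ :=
  L2L lam (fun m τ =>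
    ENNReal.ofReal (jap ((m : ℝ) / lam) ^ s * jap (sigL j lam m τ) ^ b) * f m τ)

/-- `Y^s` norm: `((1/λ) Σ_k ⟨k⟩^{2s} (∫ f(k,τ) dτ)²)^{1/2}`. -/
def Yn (lam s : ℝ) (f : ℤ → ℝ → ℝ≥0∞) : ℝ≥0∞ :=
  (ENNReal.ofReal (1 / lam) *
    ∑' m : ℤ, ENNReal.ofReal (jap ((m : ℝ) / lam) ^ (2 * s)) * (∫⁻ τ, f m τ) ^ 2) ^
    (1 / 2 : ℝ)

/-- `D₁ = {(k,τ): |k| ≥ 1, |σ| ≤ (2(2j+1)/3)|k|^{2j}}`. -/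
def D1 (j : ℕ) (lam : ℝ) : Set (ℤ × ℝ) :=
  {p | 1 ≤ |(p.1 : ℝ) / lam| ∧
    |sigL j lam p.1 p.2| ≤ 2 * (2 * (j : ℝ) + 1) / 3 * |(p.1 : ℝ) / lam| ^ (2 * j)}

/-- `D₂ = {(k,τ): |k| ≥ 1, (2(2j+1)/3)|k|^{2j} < |σ| ≤ 2(2j+1)|k|^{2j+1}}`. -/
def D2 (j : ℕ) (lam : ℝ) : Set (ℤ × ℝ) :=
  {p | 1 ≤ |(p.1 : ℝ) / lam| ∧
    2 * (2 * (j : ℝ) + 1) / 3 * |(p.1 : ℝ) / lam| ^ (2 * j) < |sigL j lam p.1 p.2| ∧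
    |sigL j lam p.1 p.2| ≤ 2 * (2 * (j : ℝ) + 1) * |(p.1 : ℝ) / lam| ^ (2 * j + 1)}

/-- `D₃ = {(k,τ): |k| ≥ 1, |σ| > 2(2j+1)|k|^{2j+1}}`. -/
def D3 (j : ℕ) (lam : ℝ) : Set (ℤ × ℝ) :=
  {p | 1 ≤ |(p.1 : ℝ) / lam| ∧
    2 * (2 * (j : ℝ) + 1) * |(p.1 : ℝ) / lam| ^ (2 * j + 1) < |sigL j lam p.1 p.2|}

/-- `D₄ = {(k,τ): 1/λ ≤ |k| ≤ 1, |σ| > 2(2j+1)|k|^{2j+1}}`. -/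
def D4 (j : ℕ) (lam : ℝ) : Set (ℤ × ℝ) :=
  {p | 1 / lam ≤ |(p.1 : ℝ) / lam| ∧ |(p.1 : ℝ) / lam| ≤ 1 ∧
    2 * (2 * (j : ℝ) + 1) * |(p.1 : ℝ) / lam| ^ (2 * j + 1) < |sigL j lam p.1 p.2|}

/-- `D₅ = {(k,τ): 1/λ ≤ |k| ≤ 1, |σ| ≤ 2(2j+1)|k|^{2j+1}}`. -/
def D5 (j : ℕ) (lam : ℝ) : Set (ℤ × ℝ) :=
  {p | 1 / lam ≤ |(p.1 : ℝ) / lam| ∧ |(p.1 : ℝ) / lam| ≤ 1 ∧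
    |sigL j lam p.1 p.2| ≤ 2 * (2 * (j : ℝ) + 1) * |(p.1 : ℝ) / lam| ^ (2 * j + 1)}

/-- Restriction `1_D f` of `f` to a region `D`. -/
def restr (D : Set (ℤ × ℝ)) (f : ℤ → ℝ → ℝ≥0∞) : ℤ → ℝ → ℝ≥0∞ :=
  fun m τ => Set.indicator D (fun p => f p.1 p.2) (m, τ)

/-- `X^s` norm: `‖1_{D₁∪D₅}f‖_{X^{s,(2j−1)/(2j)}} + ‖1_{D₂}f‖_{X^{(1−2j)s−1,s+1}}
  + ‖1_{D₃∪D₄}f‖_{X^{−s/j−1,s/j+1}}`. -/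
def XSn (j : ℕ) (lam s : ℝ) (f : ℤ → ℝ → ℝ≥0∞) : ℝ≥0∞ :=
  Xn j lam s ((2 * (j : ℝ) - 1) / (2 * (j : ℝ))) (restr (D1 j lam ∪ D5 j lam) f)
  + Xn j lam ((1 - 2 * (j : ℝ)) * s - 1) (s + 1) (restr (D2 j lam) f)
  + Xn j lam (-s / (j : ℝ) - 1) (s / (j : ℝ) + 1) (restr (D3 j lam ∪ D4 j lam) f)

/-- `Z^s` norm: `X^s` norm plus `Y^s` norm. -/
def Zn (j : ℕ) (lam s : ℝ) (f : ℤ → ℝ → ℝ≥0∞) : ℝ≥0∞ :=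
  XSn j lam s f + Yn lam s f

lemma one_le_jap (x : ℝ) : 1 ≤ jap x :=
  Real.one_le_sqrt.mpr (by nlinarith [sq_nonneg x])

lemma jap_pos (x : ℝ) : 0 < jap x := lt_of_lt_of_le one_pos (one_le_jap x)

lemma abs_le_jap (x : ℝ) : |x| ≤ jap x := by
  rw [jap, ← Real.sqrt_sq_eq_abs]
  exact Real.sqrt_le_sqrt (by nlinarith)

lemma jap_le_one_add_abs (x : ℝ) : jap x ≤ 1 + |x| := by
  rw [jap]
  calc Real.sqrt (1 + x^2) ≤ Real.sqrt ((1+|x|)^2) :=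
        Real.sqrt_le_sqrt (by nlinarith [abs_nonneg x, sq_abs x])
  _ = 1 + |x| := Real.sqrt_sq (by positivity)

lemma continuous_jap_sig (j : ℕ) (lam : ℝ) (m : ℤ) :
    Continuous fun τ : ℝ => jap (sigL j lam m τ) := by
  have h1 : Continuous fun τ : ℝ => sigL j lam m τ := by
    unfold sigL; exact continuous_id.sub continuous_const
  have h2 : Continuous jap := by
    unfold jap
    exact Real.continuous_sqrt.comp (continuous_const.add (continuous_pow 2))
  exact h2.comp h1

lemma measurable_weight (j : ℕ) (lam : ℝ) (m : ℤ) (a b : ℝ) :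
    Measurable fun τ : ℝ =>
      ENNReal.ofReal (jap ((m : ℝ) / lam) ^ a * jap (sigL j lam m τ) ^ b) := by
  apply Measurable.ennreal_ofReal
  apply Measurable.const_mul
  exact (((continuous_jap_sig j lam m).rpow_const
    (fun τ => Or.inl (jap_pos _).ne')).measurable)

section weights
variable {j : ℕ} {s : ℝ}

lemma weightA (hj : 2 ≤ j) (x y : ℝ) :
    jap x ^ s * jap y ^ (1 / (2 * (j:ℝ))) ≤
      jap x ^ s * jap y ^ ((2 * (j:ℝ) - 1) / (2 * (j:ℝ))) := by
  have hJ : (2:ℝ) ≤ (j:ℝ) := by exact_mod_cast hj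
  refine mul_le_mul_of_nonneg_left ?_ (Real.rpow_nonneg (jap_pos x).le _)
  refine Real.rpow_le_rpow_of_exponent_le (one_le_jap y) ?_
  have h2J : (0:ℝ) < 2 * (j:ℝ) := by linarith
  rw [div_le_div_iff₀ h2J h2J]
  nlinarith

lemma weightC (hj : 2 ≤ j) (hs₁ : -(j:ℝ) + 1/2 ≤ s) (hs₂ : s ≤ -(j:ℝ)/2) (x y : ℝ) :
    jap x ^ s * jap y ^ (1 / (2 * (j:ℝ))) ≤
      jap x ^ (-s / (j:ℝ) - 1) * jap y ^ (s / (j:ℝ) + 1) := by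
  have hJ : (2:ℝ) ≤ (j:ℝ) := by exact_mod_cast hj
  have hJ0 : (0:ℝ) < (j:ℝ) := by linarith
  have hinv : (j:ℝ) * (1/(j:ℝ)) = 1 := by field_simp
  have hx : s ≤ -s / (j:ℝ) - 1 := by
    rw [div_sub' hJ0.ne', le_div_iff₀ hJ0]
    nlinarith
  have hy : 1 / (2 * (j:ℝ)) ≤ s / (j:ℝ) + 1 := by
    rw [div_add' _ _ _ hJ0.ne', div_le_div_iff₀ (by linarith) hJ0]
    nlinarith
  exact mul_le_mul (Real.rpow_le_rpow_of_exponent_le (one_le_jap x) hx)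
    (Real.rpow_le_rpow_of_exponent_le (one_le_jap y) hy)
    (Real.rpow_nonneg (jap_pos y).le _) (Real.rpow_nonneg (jap_pos x).le _)

lemma weightB (hj : 2 ≤ j) (hs₁ : -(j:ℝ) + 1/2 ≤ s) (hs₂ : s ≤ -(j:ℝ)/2)
    {x y : ℝ} (hy : |y| ≤ 2 * (2 * (j:ℝ) + 1) * |x| ^ (2*j+1)) :
    jap x ^ s * jap y ^ (1 / (2 * (j:ℝ))) ≤
      (4*(j:ℝ)+3) ^ (1/(2*(j:ℝ)) - (s+1)) *
        (jap x ^ ((1 - 2*(j:ℝ)) * s - 1) * jap y ^ (s+1)) := by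
  have hJ : (2:ℝ) ≤ (j:ℝ) := by exact_mod_cast hj
  have hJ0 : (0:ℝ) < (j:ℝ) := by linarith
  have hK1 := one_le_jap x
  have hK0 := jap_pos x
  have hS0 := jap_pos y
  have hs1' : s + 1 ≤ 0 := by nlinarith
  have hipos : (0:ℝ) < 1 / (2 * (j:ℝ)) := by positivity
  have he : 0 ≤ 1/(2*(j:ℝ)) - (s+1) := by linarith
  have hxpow : |x| ^ (2*j+1) ≤ jap x ^ (2*j+1) :=
    pow_le_pow_left₀ (abs_nonneg x) (abs_le_jap x) _
  have h1pow : (1:ℝ) ≤ jap x ^ (2*j+1) := by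
    calc (1:ℝ) = 1 ^ (2*j+1) := (one_pow _).symm
    _ ≤ jap x ^ (2*j+1) := pow_le_pow_left₀ (by norm_num) hK1 _
  have hNc : ((2*j+1 : ℕ):ℝ) = 2*(j:ℝ)+1 := by push_cast; ring
  have step1 : jap y ≤ (4*(j:ℝ)+3) * jap x ^ ((2*(j:ℝ)+1 : ℝ)) := by
    rw [← hNc, Real.rpow_natCast]
    calc jap y ≤ 1 + |y| := jap_le_one_add_abs y
    _ ≤ 1 + 2 * (2*(j:ℝ)+1) * |x| ^ (2*j+1) := by linarith
    _ ≤ (4*(j:ℝ)+3) * jap x ^ (2*j+1) := by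
        nlinarith [mul_le_mul_of_nonneg_left hxpow (by linarith : (0:ℝ) ≤ 4*(j:ℝ)+2)]
  have hsplit : jap y ^ (1/(2*(j:ℝ))) =
      jap y ^ (s+1) * jap y ^ (1/(2*(j:ℝ)) - (s+1)) := by
    rw [← Real.rpow_add hS0]; ring_nf
  have h2 : jap y ^ (1/(2*(j:ℝ)) - (s+1)) ≤
      (4*(j:ℝ)+3) ^ (1/(2*(j:ℝ)) - (s+1)) *
        jap x ^ ((2*(j:ℝ)+1) * (1/(2*(j:ℝ)) - (s+1))) := by
    have h := Real.rpow_le_rpow hS0.le step1 he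
    rwa [Real.mul_rpow (by linarith) (Real.rpow_nonneg hK0.le _),
      ← Real.rpow_mul hK0.le] at h
  have h3 : jap x ^ (s + (2*(j:ℝ)+1) * (1/(2*(j:ℝ)) - (s+1))) ≤
      jap x ^ ((1 - 2*(j:ℝ)) * s - 1) := by
    apply Real.rpow_le_rpow_of_exponent_le hK1
    have h2J : (0:ℝ) < 2*(j:ℝ) := by linarith
    have hprod : (2*(j:ℝ)) * (1/(2*(j:ℝ))) = 1 := by field_simp
    have hinvle : 1/(2*(j:ℝ)) ≤ 1/4 := by
      rw [div_le_div_iff₀ h2J (by norm_num)]; linarith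
    nlinarith [hprod, hinvle]
  calc jap x ^ s * jap y ^ (1/(2*(j:ℝ)))
      = jap x ^ s * (jap y ^ (s+1) * jap y ^ (1/(2*(j:ℝ)) - (s+1))) := by rw [hsplit]
  _ ≤ jap x ^ s * (jap y ^ (s+1) * ((4*(j:ℝ)+3) ^ (1/(2*(j:ℝ)) - (s+1)) *
        jap x ^ ((2*(j:ℝ)+1) * (1/(2*(j:ℝ)) - (s+1))))) := by
      refine mul_le_mul_of_nonneg_left (mul_le_mul_of_nonneg_left h2 ?_) ?_ <;>
        exact Real.rpow_nonneg (jap_pos _).le _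
  _ = (4*(j:ℝ)+3) ^ (1/(2*(j:ℝ)) - (s+1)) *
        (jap x ^ (s + (2*(j:ℝ)+1) * (1/(2*(j:ℝ)) - (s+1))) * jap y ^ (s+1)) := by
      rw [Real.rpow_add hK0]; ring
  _ ≤ (4*(j:ℝ)+3) ^ (1/(2*(j:ℝ)) - (s+1)) *
        (jap x ^ ((1 - 2*(j:ℝ)) * s - 1) * jap y ^ (s+1)) := by
      refine mul_le_mul_of_nonneg_left
        (mul_le_mul_of_nonneg_right h3 (Real.rpow_nonneg (jap_pos _).le _))
        (Real.rpow_nonneg (by linarith) _)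

end weights

lemma cover (j : ℕ) (lam : ℝ) (hlam : 0 < lam) (m : ℤ) (hm : m ≠ 0) (τ : ℝ) :
    (m, τ) ∈ D1 j lam ∪ D5 j lam ∨ (m, τ) ∈ D2 j lam ∨
      (m, τ) ∈ D3 j lam ∪ D4 j lam := by
  have h1m : (1:ℝ) ≤ |(m:ℝ)| := by
    have h := Int.one_le_abs hm
    calc (1:ℝ) ≤ ((|m| : ℤ) : ℝ) := by exact_mod_cast h
    _ = |(m:ℝ)| := by push_cast; ring
  have hk : 1 / lam ≤ |(m:ℝ) / lam| := by
    rw [abs_div, abs_of_pos hlam]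
    gcongr
  rcases le_or_gt 1 |(m:ℝ)/lam| with h | h
  · rcases le_or_gt |sigL j lam m τ|
        (2 * (2 * (j:ℝ) + 1) / 3 * |(m:ℝ)/lam| ^ (2*j)) with h1 | h1
    · exact Or.inl (Or.inl ⟨h, h1⟩)
    · rcases le_or_gt |sigL j lam m τ|
          (2 * (2 * (j:ℝ) + 1) * |(m:ℝ)/lam| ^ (2*j+1)) with h2 | h2
      · exact Or.inr (Or.inl ⟨h, h1, h2⟩)
      · exact Or.inr (Or.inr (Or.inl ⟨h, h2⟩))
  · rcases le_or_gt |sigL j lam m τ|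
        (2 * (2 * (j:ℝ) + 1) * |(m:ℝ)/lam| ^ (2*j+1)) with h2 | h2
    · exact Or.inl (Or.inr ⟨hk, h.le, h2⟩)
    · exact Or.inr (Or.inr (Or.inr ⟨hk, h.le, h2⟩))

lemma measPreAux (P : Prop) (Q : ℝ → Prop) (hQ : MeasurableSet {τ : ℝ | Q τ}) :
    MeasurableSet {τ : ℝ | P ∧ Q τ} := by
  by_cases h : P
  · simpa [h] using hQ
  · simp [h]

lemma measurable_abs_sig (j : ℕ) (lam : ℝ) (m : ℤ) :
    Measurable fun τ : ℝ => |sigL j lam m τ| := by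
  have : Continuous fun τ : ℝ => sigL j lam m τ := by
    unfold sigL; exact continuous_id.sub continuous_const
  exact (continuous_abs.comp this).measurable

lemma measPre1 (j : ℕ) (lam : ℝ) (m : ℤ) :
    MeasurableSet {τ : ℝ | (m, τ) ∈ D1 j lam} := by
  show MeasurableSet {τ : ℝ | 1 ≤ |(m:ℝ)/lam| ∧
    |sigL j lam m τ| ≤ 2 * (2 * (j : ℝ) + 1) / 3 * |(m:ℝ)/lam| ^ (2 * j)}
  exact measPreAux _ _ (measurableSet_le (measurable_abs_sig j lam m) measurable_const)

lemma measPre2 (j : ℕ) (lam : ℝ) (m : ℤ) :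
    MeasurableSet {τ : ℝ | (m, τ) ∈ D2 j lam} := by
  show MeasurableSet {τ : ℝ | 1 ≤ |(m:ℝ)/lam| ∧
    (2 * (2 * (j : ℝ) + 1) / 3 * |(m:ℝ)/lam| ^ (2 * j) < |sigL j lam m τ| ∧
     |sigL j lam m τ| ≤ 2 * (2 * (j : ℝ) + 1) * |(m:ℝ)/lam| ^ (2 * j + 1))}
  refine measPreAux _ _ ?_
  rw [Set.setOf_and]
  exact (measurableSet_lt measurable_const (measurable_abs_sig j lam m)).inter
    (measurableSet_le (measurable_abs_sig j lam m) measurable_const)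

lemma measPre3 (j : ℕ) (lam : ℝ) (m : ℤ) :
    MeasurableSet {τ : ℝ | (m, τ) ∈ D3 j lam} := by
  show MeasurableSet {τ : ℝ | 1 ≤ |(m:ℝ)/lam| ∧
    2 * (2 * (j : ℝ) + 1) * |(m:ℝ)/lam| ^ (2 * j + 1) < |sigL j lam m τ|}
  exact measPreAux _ _ (measurableSet_lt measurable_const (measurable_abs_sig j lam m))

lemma measPre4 (j : ℕ) (lam : ℝ) (m : ℤ) :
    MeasurableSet {τ : ℝ | (m, τ) ∈ D4 j lam} := by
  show MeasurableSet {τ : ℝ | 1 / lam ≤ |(m:ℝ)/lam| ∧ (|(m:ℝ)/lam| ≤ 1 ∧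
    2 * (2 * (j : ℝ) + 1) * |(m:ℝ)/lam| ^ (2 * j + 1) < |sigL j lam m τ|)}
  exact measPreAux _ _ (measPreAux _ _
    (measurableSet_lt measurable_const (measurable_abs_sig j lam m)))

lemma measPre5 (j : ℕ) (lam : ℝ) (m : ℤ) :
    MeasurableSet {τ : ℝ | (m, τ) ∈ D5 j lam} := by
  show MeasurableSet {τ : ℝ | 1 / lam ≤ |(m:ℝ)/lam| ∧ (|(m:ℝ)/lam| ≤ 1 ∧
    |sigL j lam m τ| ≤ 2 * (2 * (j : ℝ) + 1) * |(m:ℝ)/lam| ^ (2 * j + 1))}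
  exact measPreAux _ _ (measPreAux _ _
    (measurableSet_le (measurable_abs_sig j lam m) measurable_const))

lemma sq_sum_le (a b c : ℝ≥0∞) : a^2 + b^2 + c^2 ≤ (a+b+c)^2 := by
  have h1 : a^2 ≤ a*(a+b+c) := by
    rw [sq]; exact mul_le_mul_right (le_add_right (le_add_right le_rfl)) a
  have h2 : b^2 ≤ b*(a+b+c) := by
    rw [sq]; exact mul_le_mul_right (le_add_right (le_add_left le_rfl)) b
  have h3 : c^2 ≤ c*(a+b+c) := by
    rw [sq]; exact mul_le_mul_right (le_add_left le_rfl) c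
  calc a^2+b^2+c^2 ≤ a*(a+b+c)+b*(a+b+c)+c*(a+b+c) := add_le_add (add_le_add h1 h2) h3
  _ = (a+b+c)^2 := by ring

lemma hsqA (x : ℝ≥0∞) : (x ^ (1/2:ℝ))^(2:ℕ) = x := by
  rw [← ENNReal.rpow_natCast (x ^ (1/2:ℝ)) 2, ← ENNReal.rpow_mul]; norm_num

lemma hsqB (x : ℝ≥0∞) : (x ^ (2:ℕ))^(1/2:ℝ) = x := by
  rw [← ENNReal.rpow_natCast x 2, ← ENNReal.rpow_mul]; norm_num

lemma L2L_le_of_sq (lam : ℝ) (W g1 g2 g3 : ℤ → ℝ → ℝ≥0∞) (c : ℝ≥0∞) (hcne : c ≠ ⊤)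
    (hm1 : ∀ m, Measurable fun τ => (g1 m τ)^2)
    (hm2 : ∀ m, Measurable fun τ => (g2 m τ)^2)
    (key : ∀ m τ, (W m τ)^2 ≤ c^2 * ((g1 m τ)^2 + (g2 m τ)^2 + (g3 m τ)^2)) :
    L2L lam W ≤ c * (L2L lam g1 + L2L lam g2 + L2L lam g3) := by
  simp only [L2L]
  set L : ℝ≥0∞ := ENNReal.ofReal (1 / lam) with hL
  set T1 : ℝ≥0∞ := ∑' m : ℤ, ∫⁻ τ, (g1 m τ)^2 with hT1
  set T2 : ℝ≥0∞ := ∑' m : ℤ, ∫⁻ τ, (g2 m τ)^2 with hT2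
  set T3 : ℝ≥0∞ := ∑' m : ℤ, ∫⁻ τ, (g3 m τ)^2 with hT3
  have hint : ∀ m : ℤ, (∫⁻ τ, c^2 * ((g1 m τ)^2 + (g2 m τ)^2 + (g3 m τ)^2)) =
      c^2 * ((∫⁻ τ, (g1 m τ)^2) + (∫⁻ τ, (g2 m τ)^2) + (∫⁻ τ, (g3 m τ)^2)) := by
    intro m
    rw [lintegral_const_mul' _ _ (ENNReal.pow_ne_top hcne)]
    congr 1
    rw [lintegral_add_left (by have h : Measurable fun τ => g1 m τ ^ 2 + g2 m τ ^ 2 := (hm1 m).add (hm2 m); exact h), lintegral_add_left (hm1 m)]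
  calc (L * ∑' m : ℤ, ∫⁻ τ, (W m τ)^2) ^ (1/2:ℝ)
      ≤ (L * ∑' m : ℤ, ∫⁻ τ, c^2 * ((g1 m τ)^2 + (g2 m τ)^2 + (g3 m τ)^2)) ^ (1/2:ℝ) := by
        refine ENNReal.rpow_le_rpow ?_ (by norm_num)
        exact mul_le_mul_right
          (ENNReal.tsum_le_tsum fun m => lintegral_mono fun τ => key m τ) _
  _ = (c^2 * (L*T1 + L*T2 + L*T3)) ^ (1/2:ℝ) := by
        congr 1
        simp_rw [hint]
        rw [ENNReal.tsum_mul_left, ENNReal.tsum_add, ENNReal.tsum_add, ← hT1, ← hT2, ← hT3]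
        ring
  _ = c * (L*T1 + L*T2 + L*T3) ^ (1/2:ℝ) := by
        rw [ENNReal.mul_rpow_of_nonneg _ _ (by norm_num : (0:ℝ) ≤ 1/2), hsqB]
  _ ≤ c * ((L*T1)^(1/2:ℝ) + (L*T2)^(1/2:ℝ) + (L*T3)^(1/2:ℝ)) := by
        refine mul_le_mul_right ?_ c
        calc (L*T1 + L*T2 + L*T3) ^ (1/2:ℝ)
            = (((L*T1)^(1/2:ℝ))^(2:ℕ) + ((L*T2)^(1/2:ℝ))^(2:ℕ) + ((L*T3)^(1/2:ℝ))^(2:ℕ)) ^ (1/2:ℝ) := by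
              rw [hsqA, hsqA, hsqA]
        _ ≤ (((L*T1)^(1/2:ℝ) + (L*T2)^(1/2:ℝ) + (L*T3)^(1/2:ℝ))^(2:ℕ)) ^ (1/2:ℝ) :=
              ENNReal.rpow_le_rpow (sq_sum_le _ _ _) (by norm_num)
        _ = (L*T1)^(1/2:ℝ) + (L*T2)^(1/2:ℝ) + (L*T3)^(1/2:ℝ) := hsqB _

/-- **Lemma 2.5, estimate (2.06), first inequality:** `‖u‖_{X^{s,1/(2j)}} ≤ C‖u‖_{Z^s}`. -/
theorem stmt_9 (j : ℕ) (hj : 2 ≤ j) (s : ℝ)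
    (hs₁ : -(j : ℝ) + 1 / 2 ≤ s) (hs₂ : s ≤ -(j : ℝ) / 2) :
    ∃ C : ℝ, 0 < C ∧ ∀ lam : ℝ, 1 ≤ lam → ∀ f : ℤ → ℝ → ℝ≥0∞,
      Measurable (Function.uncurry f) → (∀ τ, f 0 τ = 0) →
      Xn j lam s (1 / (2 * (j : ℝ))) f ≤ ENNReal.ofReal C * Zn j lam s f := by
  have hJ : (2:ℝ) ≤ (j:ℝ) := by exact_mod_cast hj
  have hbase : (1:ℝ) ≤ 4*(j:ℝ)+3 := by linarith
  have hs1' : s + 1 ≤ 0 := by nlinarith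
  have hipos : (0:ℝ) < 1/(2*(j:ℝ)) := by positivity
  have he0 : (0:ℝ) ≤ 1/(2*(j:ℝ)) - (s+1) := by linarith
  have hC1 : (1:ℝ) ≤ (4*(j:ℝ)+3) ^ (1/(2*(j:ℝ)) - (s+1)) := Real.one_le_rpow hbase he0
  refine ⟨(4*(j:ℝ)+3) ^ (1/(2*(j:ℝ)) - (s+1)), by linarith, ?_⟩
  intro lam hlam f hfm hf0
  set c : ℝ≥0∞ := ENNReal.ofReal ((4*(j:ℝ)+3) ^ (1/(2*(j:ℝ)) - (s+1))) with hc
  have hc1 : (1:ℝ≥0∞) ≤ c := ENNReal.one_le_ofReal.mpr hC1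
  have hcsq : (1:ℝ≥0∞) ≤ c^2 := one_le_pow_of_one_le' hc1 2
  have hcne : c ≠ ⊤ := ENNReal.ofReal_ne_top
  set W : ℤ → ℝ → ℝ≥0∞ := fun m τ =>
    ENNReal.ofReal (jap ((m:ℝ)/lam) ^ s * jap (sigL j lam m τ) ^ (1/(2*(j:ℝ)))) * f m τ
    with hW
  set G1 : ℤ → ℝ → ℝ≥0∞ := fun m τ =>
    ENNReal.ofReal (jap ((m:ℝ)/lam) ^ s *
      jap (sigL j lam m τ) ^ ((2*(j:ℝ)-1)/(2*(j:ℝ)))) *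
      restr (D1 j lam ∪ D5 j lam) f m τ with hG1
  set G2 : ℤ → ℝ → ℝ≥0∞ := fun m τ =>
    ENNReal.ofReal (jap ((m:ℝ)/lam) ^ ((1-2*(j:ℝ))*s-1) *
      jap (sigL j lam m τ) ^ (s+1)) *
      restr (D2 j lam) f m τ with hG2
  set G3 : ℤ → ℝ → ℝ≥0∞ := fun m τ =>
    ENNReal.ofReal (jap ((m:ℝ)/lam) ^ (-s/(j:ℝ)-1) *
      jap (sigL j lam m τ) ^ (s/(j:ℝ)+1)) *
      restr (D3 j lam ∪ D4 j lam) f m τ with hG3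
  have key : ∀ m τ, (W m τ)^2 ≤ c^2 * ((G1 m τ)^2 + (G2 m τ)^2 + (G3 m τ)^2) := by
    intro m τ
    by_cases hm : m = 0
    · subst hm
      simp only [hW, hf0, mul_zero]
      simp
    rcases cover j lam (by linarith) m hm τ with h | h | h
    · have hr : restr (D1 j lam ∪ D5 j lam) f m τ = f m τ := Set.indicator_of_mem h _
      have hw := weightA (s := s) hj ((m:ℝ)/lam) (sigL j lam m τ)
      have hWG : W m τ ≤ G1 m τ := by
        simp only [hW, hG1, hr]
        exact mul_le_mul_left (ENNReal.ofReal_le_ofReal hw) _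
      calc (W m τ)^2 ≤ (G1 m τ)^2 := pow_le_pow_left' hWG 2
      _ ≤ (G1 m τ)^2 + (G2 m τ)^2 + (G3 m τ)^2 := le_add_right (le_add_right le_rfl)
      _ ≤ c^2 * ((G1 m τ)^2 + (G2 m τ)^2 + (G3 m τ)^2) :=
          le_mul_of_one_le_left zero_le hcsq
    · have hr : restr (D2 j lam) f m τ = f m τ := Set.indicator_of_mem h _
      have hw := weightB (s := s) hj hs₁ hs₂ (x := (m:ℝ)/lam) (y := sigL j lam m τ) h.2.2
      have hWG : W m τ ≤ c * G2 m τ := by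
        simp only [hW, hG2, hr]
        calc ENNReal.ofReal (jap ((m:ℝ)/lam) ^ s * jap (sigL j lam m τ) ^ (1/(2*(j:ℝ)))) * f m τ
            ≤ ENNReal.ofReal ((4*(j:ℝ)+3) ^ (1/(2*(j:ℝ)) - (s+1)) *
                (jap ((m:ℝ)/lam) ^ ((1-2*(j:ℝ))*s-1) * jap (sigL j lam m τ) ^ (s+1))) * f m τ :=
              mul_le_mul_left (ENNReal.ofReal_le_ofReal hw) _
        _ = c * (ENNReal.ofReal (jap ((m:ℝ)/lam) ^ ((1-2*(j:ℝ))*s-1) *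
                jap (sigL j lam m τ) ^ (s+1)) * f m τ) := by
              rw [ENNReal.ofReal_mul (Real.rpow_nonneg (by linarith) _), hc, mul_assoc]
      calc (W m τ)^2 ≤ (c * G2 m τ)^2 := pow_le_pow_left' hWG 2
      _ = c^2 * (G2 m τ)^2 := mul_pow c _ 2
      _ ≤ c^2 * ((G1 m τ)^2 + (G2 m τ)^2 + (G3 m τ)^2) :=
          mul_le_mul_right (le_add_right (le_add_left le_rfl)) _
    · have hr : restr (D3 j lam ∪ D4 j lam) f m τ = f m τ := Set.indicator_of_mem h _
      have hw := weightC (s := s) hj hs₁ hs₂ ((m:ℝ)/lam) (sigL j lam m τ)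
      have hWG : W m τ ≤ G3 m τ := by
        simp only [hW, hG3, hr]
        exact mul_le_mul_left (ENNReal.ofReal_le_ofReal hw) _
      calc (W m τ)^2 ≤ (G3 m τ)^2 := pow_le_pow_left' hWG 2
      _ ≤ (G1 m τ)^2 + (G2 m τ)^2 + (G3 m τ)^2 := le_add_left le_rfl
      _ ≤ c^2 * ((G1 m τ)^2 + (G2 m τ)^2 + (G3 m τ)^2) :=
          le_mul_of_one_le_left zero_le hcsq
  have hindic : ∀ (D : Set (ℤ × ℝ)) (m : ℤ),
      restr D f m = Set.indicator {τ : ℝ | (m,τ) ∈ D} (f m) := by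
    intro D m
    funext τ
    by_cases h : (m,τ) ∈ D
    · simp [restr, Set.indicator_of_mem, h]
    · simp [restr, Set.indicator_of_notMem, h]
  have hfme : ∀ m : ℤ, Measurable (f m) := fun m => hfm.comp measurable_prodMk_left
  have hm1 : ∀ m, Measurable fun τ => (G1 m τ)^2 := by
    intro m
    apply Measurable.pow_const
    simp only [hG1]
    refine (measurable_weight j lam m _ _).mul ?_
    rw [hindic]
    refine Measurable.indicator (hfme m) ?_
    have hset : {τ : ℝ | (m,τ) ∈ D1 j lam ∪ D5 j lam} =
        {τ : ℝ | (m,τ) ∈ D1 j lam} ∪ {τ : ℝ | (m,τ) ∈ D5 j lam} := by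
      ext τ; simp [Set.mem_union]
    rw [hset]
    exact (measPre1 j lam m).union (measPre5 j lam m)
  have hm2 : ∀ m, Measurable fun τ => (G2 m τ)^2 := by
    intro m
    apply Measurable.pow_const
    simp only [hG2]
    refine (measurable_weight j lam m _ _).mul ?_
    rw [hindic]
    exact Measurable.indicator (hfme m) (measPre2 j lam m)
  have main := L2L_le_of_sq lam W G1 G2 G3 c hcne hm1 hm2 key
  have hXW : Xn j lam s (1 / (2 * (j:ℝ))) f = L2L lam W := rfl
  have hZ : L2L lam G1 + L2L lam G2 + L2L lam G3 ≤ Zn j lam s f := by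
    have hXS : XSn j lam s f = L2L lam G1 + L2L lam G2 + L2L lam G3 := rfl
    rw [Zn, hXS]
    exact le_add_right le_rfl
  rw [hXW]
  exact le_trans main (mul_le_mul_right hZ c)

end
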